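/- For a C¹ linear transport along a path with matrix H in a given frame, the following are equivalent: (a) H(t,s) = 1 for all s,t ∈ J; (b) the coefficient matrix Γ(s) := ∂H(s,t)/∂t|_{t=s} vanishes for all s ∈ J; (c) the induced derivation acts on every C¹ section componentwise as (Dσ)^i(s) = dσ^i(s)/ds. -/

import Mathlib

noncomputable local instance {n : ℕ} : NormedAddCommGroup (Matrix (Fin n) (Fin n) ℝ) :=
  Matrix.normedAddCommGroup
noncomputable local instance {n : ℕ} : NormedSpace ℝ (Matrix (Fin n) (Fin n) ℝ) :=
  Matrix.normedSpace

/-- For a C¹ linear transport with matrix `H` (C¹ in its second argument, with partial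
derivative `G`, coefficients `Γ s := G s s`), the following are equivalent in the given
frame: (a) `H t s = 1` for all `s, t ∈ J`; (b) the coefficients `Γ s` vanish on `J`;
(c) the induced derivation acts on every C¹ section as the plain componentwise derivative,
i.e. `(Dσ)(s) = σ'(s)`. -/
theorem stmt_19 (J : Set ℝ) (hJo : IsOpen J) (hJ : J.Nonempty) (hJc : J.OrdConnected)
    (n : ℕ)
    (H G : ℝ → ℝ → Matrix (Fin n) (Fin n) ℝ)
    (hco : ∀ r ∈ J, ∀ s ∈ J, ∀ t ∈ J, H r t * H t s = H r s)
    (hid : ∀ s ∈ J, H s s = 1)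
    (hd2 : ∀ s ∈ J, ∀ t ∈ J, HasDerivAt (fun u => H s u) (G s t) t) :
    ((∀ s ∈ J, ∀ t ∈ J, H t s = 1) ↔ (∀ s ∈ J, G s s = 0)) ∧
    ((∀ s ∈ J, G s s = 0) ↔
      (∀ σ σ' : ℝ → (Fin n → ℝ), (∀ s ∈ J, HasDerivAt σ (σ' s) s) →
        ∀ s ∈ J, Filter.Tendsto
          (fun ε : ℝ => ε⁻¹ • ((H s (s + ε)).mulVec (σ (s + ε)) - σ s))
          (nhdsWithin 0 {0}ᶜ) (nhds (σ' s)))) := by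
  have hconv : Convex ℝ J := convex_iff_ordConnected.mpr hJc
  -- (b) → (a')
  have key : (∀ s ∈ J, G s s = 0) → ∀ s ∈ J, ∀ t ∈ J, H s t = 1 := by
    intro hΓ s hs t ht
    have hG0 : ∀ u ∈ J, G s u = 0 := by
      intro u hu
      have h2 : HasDerivAt (fun w => H s u * H u w) (H s u * G u u) u := by
        have := (LinearMap.toContinuousLinearMap
          (LinearMap.mulLeft ℝ (H s u))).hasFDerivAt.comp_hasDerivAt u (hd2 u hu u hu)
        simp only [Function.comp_def, LinearMap.coe_toContinuousLinearMap',
          LinearMap.mulLeft_apply] at this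
        exact this
      have heq : (fun w => H s u * H u w) =ᶠ[nhds u] fun w => H s w := by
        filter_upwards [hJo.mem_nhds hu] with w hw
        exact hco s hs w hw u hu
      have h3 : HasDerivAt (fun w => H s w) (H s u * G u u) u :=
        h2.congr_of_eventuallyEq heq.symm
      have h4 := (hd2 s hs u hu).unique h3
      rw [h4, hΓ u hu, mul_zero]
    have hb := Convex.norm_image_sub_le_of_norm_hasDerivWithin_le (C := 0)
      (f := fun u => H s u) (f' := fun u => G s u) (s := J)
      (fun u hu => (hd2 s hs u hu).hasDerivWithinAt)
      (fun u hu => by simp [hG0 u hu]) hconv hs ht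
    have : H s t = H s s := by
      have h0 : H s t - H s s = 0 := by simpa using hb
      exact sub_eq_zero.mp h0
    rw [this, hid s hs]
  refine ⟨⟨?_, ?_⟩, ?_, ?_⟩
  · -- (a) → (b)
    intro h s hs
    have h1 : HasDerivAt (fun u => H s u) 0 s := by
      refine (hasDerivAt_const s (1 : Matrix (Fin n) (Fin n) ℝ)).congr_of_eventuallyEq ?_
      filter_upwards [hJo.mem_nhds hs] with u hu
      exact h u hu s hs
    exact (hd2 s hs s hs).unique h1
  · -- (b) → (a)
    intro hΓ s hs t ht
    exact key hΓ t ht s hs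
  · -- (b) → (c)
    intro hΓ σ σ' hσ s hs
    have hmap : Filter.Tendsto (fun ε : ℝ => s + ε) (nhdsWithin 0 {0}ᶜ)
        (nhdsWithin s {s}ᶜ) := by
      rw [tendsto_nhdsWithin_iff]
      constructor
      · have : Filter.Tendsto (fun ε : ℝ => s + ε) (nhds 0) (nhds s) := by
          simpa [Pi.add_def] using (continuous_const.add continuous_id).tendsto (0 : ℝ)
        exact this.mono_left nhdsWithin_le_nhds
      · filter_upwards [self_mem_nhdsWithin] with ε (hε : ε ∈ ({0}ᶜ : Set ℝ))
        simp only [Set.mem_compl_iff, Set.mem_singleton_iff] at hε ⊢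
        intro h; exact hε (by linarith)
    have h1 : Filter.Tendsto (fun ε : ℝ => slope σ s (s + ε)) (nhdsWithin 0 {0}ᶜ)
        (nhds (σ' s)) :=
      (hasDerivAt_iff_tendsto_slope.mp (hσ s hs)).comp hmap
    refine h1.congr' ?_
    have hJev : ∀ᶠ ε : ℝ in nhdsWithin 0 {0}ᶜ, s + ε ∈ J := by
      have : ∀ᶠ ε : ℝ in nhds (0:ℝ), s + ε ∈ J := by
        have hc : Filter.Tendsto (fun ε : ℝ => s + ε) (nhds 0) (nhds s) := by
          simpa [Pi.add_def] using (continuous_const.add continuous_id).tendsto (0 : ℝ)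
        exact hc.eventually (hJo.mem_nhds hs)
      exact nhdsWithin_le_nhds this
    filter_upwards [hJev, self_mem_nhdsWithin] with ε hεJ (hε : ε ∈ ({0}ᶜ : Set ℝ))
    have h1eq : H s (s + ε) = 1 := key hΓ s hs (s + ε) hεJ
    simp [slope_def_module, h1eq, Matrix.one_mulVec]
  · -- (c) → (b)
    intro hc s hs
    ext i j
    set v : Fin n → ℝ := Pi.single j 1 with hv
    have h1 := hc (fun _ => v) (fun _ => 0) (fun u _ => hasDerivAt_const u v) s hs
    have h2 : HasDerivAt (fun ε : ℝ => H s (s + ε)) (G s s) 0 := by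
      have hin : HasDerivAt (fun ε : ℝ => s + ε) 1 0 := by
        simpa using (hasDerivAt_id (0:ℝ)).const_add s
      have hg : HasDerivAt (fun u => H s u) (G s s) ((fun ε : ℝ => s + ε) 0) := by
        simpa using hd2 s hs s hs
      have := hg.scomp 0 hin
      simp only [Function.comp_def, one_smul] at this; exact this
    let L : Matrix (Fin n) (Fin n) ℝ →L[ℝ] (Fin n → ℝ) :=
      LinearMap.toContinuousLinearMap
        { toFun := fun M => M.mulVec v
          map_add' := fun A B => Matrix.add_mulVec A B v
          map_smul' := fun c A => by simp [Matrix.smul_mulVec] }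
    have h3 : HasDerivAt (fun ε : ℝ => (H s (s + ε)).mulVec v) ((G s s).mulVec v) 0 := by
      have := L.hasFDerivAt.comp_hasDerivAt 0 h2
      simp only [L, Function.comp_def, LinearMap.coe_toContinuousLinearMap'] at this; exact this
    have h4 := hasDerivAt_iff_tendsto_slope.mp h3
    have h5 : Filter.Tendsto (fun ε : ℝ => ε⁻¹ • ((H s (s + ε)).mulVec v - v))
        (nhdsWithin 0 {0}ᶜ) (nhds ((G s s).mulVec v)) := by
      refine h4.congr fun ε => ?_
      simp [slope_def_module, hid s hs, Matrix.one_mulVec]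
    have h6 : (G s s).mulVec v = 0 := tendsto_nhds_unique h5 h1
    have := congrFun h6 i
    simpa [hv, Matrix.mulVec_single] using this
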